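/- Let ε, η > 0 and q ∈ ℕ, and let μ be the product of the uniform probability measure on ℤ/qℤ and Lebesgue measure on [0,1]. Suppose A ⊆ ℤ/qℤ × [0,1] is an open set with μ(A) ≥ 1/3 + ε, and let δ > 0. If μ(D_δ(A)) > 4μ(A) − ε, where D_δ(A) = {x : (1_A∗1_{−A})(x) ≥ δ} and 1_A∗1_{−A}(x) = μ(A ∩ (A + x)), then T(A) ≥ 2εδ, where T(A) = ∬ 1_A(x)1_A(x')1_A(x+x') dμ(x)dμ(x'). -/

import Mathlib

open MeasureTheory

/-- The measure on `ℤ/qℤ × ℝ`: the product of the uniform probability measure on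
`ℤ/qℤ` and Lebesgue measure. -/
noncomputable def muZR (q : ℕ) : Measure (ZMod q × ℝ) :=
  (((q : ENNReal))⁻¹ • Measure.count).prod volume

/-- `A` is an open subset of `ℤ/qℤ × [0,1]` (in the subspace topology). -/
def IsOpenBox (q : ℕ) (A : Set (ZMod q × ℝ)) : Prop :=
  A ⊆ Set.univ ×ˢ Set.Icc (0 : ℝ) 1 ∧
    ∃ U : Set (ZMod q × ℝ), IsOpen U ∧ A = U ∩ Set.univ ×ˢ Set.Icc (0 : ℝ) 1

/-- `T(A) = ∬ 1_A(x) 1_A(x') 1_A(x+x') dμ(x) dμ(x')`. -/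
noncomputable def Tcount (q : ℕ) (A : Set (ZMod q × ℝ)) : ℝ :=
  ∫ x, ∫ y, A.indicator (fun _ => (1 : ℝ)) x * A.indicator (fun _ => (1 : ℝ)) y *
    A.indicator (fun _ => (1 : ℝ)) (x + y) ∂(muZR q) ∂(muZR q)

section Aux

variable (q : ℕ) [NeZero q]

instance : MeasurableAdd₂ (ZMod q) := ⟨measurable_of_countable _⟩
instance : MeasurableNeg (ZMod q) := ⟨measurable_of_countable _⟩

lemma cnt_map_eq {f : ZMod q → ZMod q} (hf : Function.Bijective f) :
    Measure.map f ((((q : ℕ) : ENNReal))⁻¹ • Measure.count) =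
      (((q : ℕ) : ENNReal))⁻¹ • Measure.count := by
  rw [Measure.map_smul]
  congr 1
  ext s hs
  rw [Measure.map_apply (measurable_of_countable f) hs]
  have h1 : f ⁻¹' s = (Equiv.ofBijective f hf).symm '' s := by
    ext x
    simp [Equiv.eq_symm_apply (Equiv.ofBijective f hf), eq_comm]
  rw [h1, Measure.count_injective_image (Equiv.ofBijective f hf).symm.injective]

lemma cnt_univ : ((((q : ℕ) : ENNReal))⁻¹ • (Measure.count : Measure (ZMod q))) Set.univ = 1 := by
  rw [Measure.smul_apply, smul_eq_mul]
  simp only [Measure.count_univ]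
  simp only [ENat.card_eq_coe_fintype_card, ZMod.card, ENat.toENNReal_coe]
  exact ENNReal.inv_mul_cancel (by exact_mod_cast NeZero.ne q) (by simp)

instance : IsFiniteMeasure ((((q : ℕ) : ENNReal))⁻¹ • (Measure.count : Measure (ZMod q))) := by
  constructor
  rw [cnt_univ]
  exact ENNReal.one_lt_top

instance : SigmaFinite (muZR q) := by
  unfold muZR; infer_instance

lemma muZR_map_add (c : ZMod q × ℝ) :
    Measure.map (fun x => c + x) (muZR q) = muZR q := by
  have hfg : (fun x : ZMod q × ℝ => c + x) = Prod.map (fun a => c.1 + a) (fun b => c.2 + b) :=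
    rfl
  rw [muZR, hfg, ← Measure.map_prod_map _ _ (measurable_of_countable _)
    (measurable_const_add c.2)]
  have hb : Function.Bijective (fun a : ZMod q => c.1 + a) := (Equiv.addLeft c.1).bijective
  rw [cnt_map_eq q hb, map_add_left_eq_self volume c.2]

lemma muZR_map_neg :
    Measure.map (Neg.neg : ZMod q × ℝ → ZMod q × ℝ) (muZR q) = muZR q := by
  have hfg : (Neg.neg : ZMod q × ℝ → ZMod q × ℝ) =
      Prod.map (Neg.neg : ZMod q → ZMod q) (Neg.neg : ℝ → ℝ) := rfl
  rw [muZR, hfg, ← Measure.map_prod_map _ _ (measurable_of_countable _) measurable_neg]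
  have hb : Function.Bijective (Neg.neg : ZMod q → ZMod q) := neg_involutive.bijective
  rw [cnt_map_eq q hb, Measure.map_neg_eq_self volume]

instance : (muZR q).IsAddLeftInvariant := ⟨muZR_map_add q⟩

instance : (muZR q).IsNegInvariant := ⟨by
  rw [Measure.neg]; exact muZR_map_neg q⟩

end Aux

/-- If `A ⊆ ℤ/qℤ × [0,1]` is open with `μ(A) ≥ 1/3 + ε` and
`μ(D_δ(A)) > 4μ(A) − ε`, then `T(A) ≥ 2εδ`. -/
theorem stmt_18 (ε η δ : ℝ) (hε : 0 < ε) (hη : 0 < η) (hδ : 0 < δ)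
    (q : ℕ) (hq : 0 < q) (A : Set (ZMod q × ℝ)) (hA : IsOpenBox q A)
    (hmes : 1 / 3 + ε ≤ (muZR q A).toReal)
    (hD : 4 * (muZR q A).toReal - ε <
      (muZR q {x : ZMod q × ℝ | δ ≤ (muZR q {y | y ∈ A ∧ y - x ∈ A}).toReal}).toReal) :
    2 * ε * δ ≤ Tcount q A := by
  haveI : NeZero q := ⟨hq.ne'⟩
  set μ := muZR q with hμ
  set B : Set (ZMod q × ℝ) := Set.univ ×ˢ Set.Icc (0 : ℝ) 1 with hBdef
  set B2 : Set (ZMod q × ℝ) := Set.univ ×ˢ Set.Icc (-1 : ℝ) 1 with hB2def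
  have hB : μ B = 1 := by
    rw [hμ, muZR, hBdef, Measure.prod_prod, cnt_univ, Real.volume_Icc]
    norm_num
  have hB2 : μ B2 = 2 := by
    rw [hμ, muZR, hB2def, Measure.prod_prod, cnt_univ, Real.volume_Icc]
    norm_num
  have hAm : MeasurableSet A := by
    obtain ⟨hsub, U, hU, rfl⟩ := hA
    exact hU.measurableSet.inter (MeasurableSet.univ.prod measurableSet_Icc)
  have hAB : A ⊆ B := hA.1
  have hμA : μ A ≤ 1 := hB ▸ measure_mono hAB
  set f : ZMod q × ℝ → ENNReal := fun x => μ {y | y ∈ A ∧ y - x ∈ A} with hfdef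
  have hf_meas : Measurable f := by
    have hs : MeasurableSet {p : (ZMod q × ℝ) × (ZMod q × ℝ) | p.2 ∈ A ∧ p.2 - p.1 ∈ A} :=
      (measurable_snd hAm).inter ((measurable_snd.sub measurable_fst) hAm)
    exact measurable_measure_prodMk_left hs
  set D : Set (ZMod q × ℝ) :=
    {x : ZMod q × ℝ | δ ≤ (muZR q {y | y ∈ A ∧ y - x ∈ A}).toReal} with hDdef
  have hD_meas : MeasurableSet D :=
    measurableSet_le measurable_const hf_meas.ennreal_toReal
  -- symmetry
  have hsym : ∀ x : ZMod q × ℝ, μ {y | y ∈ A ∧ x + y ∈ A} = f x := by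
    intro x
    have hpre : (fun y : ZMod q × ℝ => y + x) ⁻¹' {y | y ∈ A ∧ y - x ∈ A} =
        {y | y ∈ A ∧ x + y ∈ A} := by
      ext y
      simp only [Set.mem_preimage, Set.mem_setOf_eq, add_sub_cancel_right]
      rw [add_comm x y, and_comm]
    rw [hfdef]
    simp only [← hμ]
    rw [← hpre, measure_preimage_add_right μ x _]
  have hfneg : ∀ x : ZMod q × ℝ, f (-x) = f x := by
    intro x
    calc f (-x) = μ {y | y ∈ A ∧ x + y ∈ A} := by
          simp only [hfdef]
          congr 1
          ext y
          simp only [Set.mem_setOf_eq, sub_neg_eq_add]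
          rw [add_comm y x]
      _ = f x := hsym x
  have hD_neg : ∀ x, x ∈ D → -x ∈ D := by
    intro x hx
    have : δ ≤ (f x).toReal := hx
    show δ ≤ (f (-x)).toReal
    rwa [hfneg]
  have hD_sub : D ⊆ B2 := by
    intro x hx
    have hfx : δ ≤ (f x).toReal := hx
    have hne : {y : ZMod q × ℝ | y ∈ A ∧ y - x ∈ A}.Nonempty := by
      by_contra h
      rw [Set.not_nonempty_iff_eq_empty] at h
      have : f x = 0 := by rw [hfdef]; simp only [← hμ, h, measure_empty]
      rw [this] at hfx; simp at hfx; linarith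
    obtain ⟨y, hy1, hy2⟩ := hne
    have h1 := hAB hy1
    have h2 := hA.1 hy2
    simp only [hBdef, Set.mem_prod, Set.mem_univ, true_and, Set.mem_Icc] at h1 h2
    have hsub2 : (y - x).2 = y.2 - x.2 := rfl
    rw [hsub2] at h2
    refine ⟨Set.mem_univ _, ?_⟩
    simp only [Set.mem_Icc]
    constructor <;> linarith [h1.1, h1.2, h2.1, h2.2]
  set Dp : Set (ZMod q × ℝ) := D ∩ B with hDpdef
  have hDp_meas : MeasurableSet Dp :=
    hD_meas.inter (MeasurableSet.univ.prod measurableSet_Icc)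
  have hDp_le : μ Dp ≤ 1 := hB ▸ measure_mono Set.inter_subset_right
  have hhalf : μ D ≤ μ Dp + μ Dp := by
    have hcov : D ⊆ Dp ∪ Neg.neg ⁻¹' Dp := by
      intro x hx
      have hx2 := hD_sub hx
      simp only [hB2def, Set.mem_prod, Set.mem_univ, true_and, Set.mem_Icc] at hx2
      rcases le_or_gt 0 x.2 with h | h
      · left
        exact ⟨hx, Set.mem_univ _, Set.mem_Icc.2 ⟨h, hx2.2⟩⟩
      · right
        refine ⟨hD_neg x hx, Set.mem_univ _, ?_⟩
        have : (-x).2 = -x.2 := rfl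
        rw [this, Set.mem_Icc]
        constructor <;> linarith [hx2.1]
    calc μ D ≤ μ (Dp ∪ Neg.neg ⁻¹' Dp) := measure_mono hcov
      _ ≤ μ Dp + μ (Neg.neg ⁻¹' Dp) := measure_union_le _ _
      _ = μ Dp + μ Dp := by rw [Measure.measure_preimage_neg]
  have hkey : μ (A ∪ Dp) + μ (A ∩ Dp) = μ A + μ Dp := measure_union_add_inter A hDp_meas
  have hUn : μ (A ∪ Dp) ≤ 1 := by
    refine hB ▸ measure_mono (Set.union_subset hAB Set.inter_subset_right)
  -- convert to real numbers
  have hA_ne : μ A ≠ ⊤ := (hμA.trans_lt ENNReal.one_lt_top).ne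
  have hDp_ne : μ Dp ≠ ⊤ := (hDp_le.trans_lt ENNReal.one_lt_top).ne
  have hUn_ne : μ (A ∪ Dp) ≠ ⊤ := (hUn.trans_lt ENNReal.one_lt_top).ne
  have hInt_ne : μ (A ∩ Dp) ≠ ⊤ :=
    ((measure_mono Set.inter_subset_left).trans_lt (hA_ne.lt_top)).ne
  have r1 : (μ D).toReal ≤ (μ Dp).toReal + (μ Dp).toReal := by
    rw [← ENNReal.toReal_add hDp_ne hDp_ne]
    exact ENNReal.toReal_mono (by simp [ENNReal.add_ne_top, hDp_ne]) hhalf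
  have r2 : (μ (A ∪ Dp)).toReal + (μ (A ∩ Dp)).toReal = (μ A).toReal + (μ Dp).toReal := by
    rw [← ENNReal.toReal_add hUn_ne hInt_ne, ← ENNReal.toReal_add hA_ne hDp_ne, hkey]
  have r3 : (μ (A ∪ Dp)).toReal ≤ 1 := by
    have := ENNReal.toReal_mono (by simp) hUn
    simpa using this
  have hm : 2 * ε ≤ (μ (A ∩ Dp)).toReal := by
    have hDD : (μ D).toReal = (muZR q D).toReal := by rw [hμ]
    rw [hDdef] at hDD
    linarith [hD, r1, r2, r3, hmes]
  -- now the integral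
  set F : ZMod q × ℝ → ℝ :=
    fun x => A.indicator (fun _ => (1 : ℝ)) x * (μ {y | y ∈ A ∧ x + y ∈ A}).toReal with hFdef
  have hSx_meas : ∀ x : ZMod q × ℝ, MeasurableSet {y | y ∈ A ∧ x + y ∈ A} := by
    intro x
    exact hAm.inter ((measurable_const_add x) hAm)
  have hT : Tcount q A = ∫ x, F x ∂μ := by
    rw [Tcount]
    refine integral_congr_ae (Filter.Eventually.of_forall fun x => ?_)
    have hinner : ∀ y : ZMod q × ℝ,
        A.indicator (fun _ => (1 : ℝ)) x * A.indicator (fun _ => (1 : ℝ)) y *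
          A.indicator (fun _ => (1 : ℝ)) (x + y) =
        A.indicator (fun _ => (1 : ℝ)) x *
          ({y : ZMod q × ℝ | y ∈ A ∧ x + y ∈ A}.indicator (fun _ => (1 : ℝ)) y) := by
      intro y
      by_cases hy : y ∈ A <;> by_cases hxy : x + y ∈ A <;>
        simp [Set.indicator_apply, hy, hxy]
    simp only [hinner]
    rw [integral_const_mul, integral_indicator_const (1 : ℝ) (hSx_meas x)]
    simp [hFdef, hμ, Measure.real]
  have hf_meas2 : Measurable fun x : ZMod q × ℝ => μ {y | y ∈ A ∧ x + y ∈ A} := by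
    have hs : MeasurableSet {p : (ZMod q × ℝ) × (ZMod q × ℝ) | p.2 ∈ A ∧ p.1 + p.2 ∈ A} :=
      (measurable_snd hAm).inter ((measurable_fst.add measurable_snd) hAm)
    exact measurable_measure_prodMk_left hs
  have hF_meas : Measurable F :=
    (measurable_const.indicator hAm).mul hf_meas2.ennreal_toReal
  have hF_nonneg : ∀ x, 0 ≤ F x := fun x =>
    mul_nonneg (Set.indicator_nonneg (fun _ _ => zero_le_one) x) ENNReal.toReal_nonneg
  have hF_le : ∀ x, F x ≤ A.indicator (fun _ => (1 : ℝ)) x := by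
    intro x
    by_cases hx : x ∈ A
    · rw [hFdef]
      simp only [Set.indicator_of_mem hx, one_mul]
      have h1 : μ {y | y ∈ A ∧ x + y ∈ A} ≤ μ A :=
        measure_mono fun y hy => hy.1
      calc (μ {y | y ∈ A ∧ x + y ∈ A}).toReal ≤ (μ A).toReal :=
            ENNReal.toReal_mono hA_ne h1
        _ ≤ 1 := by
            have := ENNReal.toReal_mono (by simp) hμA
            simpa using this
    · simp [hFdef, Set.indicator_of_notMem hx]
  have hbound : Integrable (A.indicator fun _ => (1 : ℝ)) μ := by
    rw [integrable_indicator_iff hAm]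
    exact integrableOn_const hA_ne
  have hF_int : Integrable F μ := by
    refine hbound.mono' hF_meas.aestronglyMeasurable ?_
    refine Filter.Eventually.of_forall fun x => ?_
    rw [Real.norm_of_nonneg (hF_nonneg x)]
    exact hF_le x
  have hpt : ∀ x, (A ∩ Dp).indicator (fun _ => δ) x ≤ F x := by
    intro x
    by_cases hx : x ∈ A ∩ Dp
    · rw [Set.indicator_of_mem hx]
      have hxA : x ∈ A := hx.1
      have hxD : δ ≤ (f x).toReal := hx.2.1
      rw [hFdef]
      simp only [Set.indicator_of_mem hxA, one_mul]
      rwa [hsym x]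
    · rw [Set.indicator_of_notMem hx]
      exact hF_nonneg x
  have hmono : ∫ x, (A ∩ Dp).indicator (fun _ => δ) x ∂μ ≤ ∫ x, F x ∂μ := by
    refine integral_mono_of_nonneg ?_ hF_int (Filter.Eventually.of_forall hpt)
    exact Filter.Eventually.of_forall fun x => Set.indicator_nonneg (fun _ _ => hδ.le) x
  have hleft : ∫ x, (A ∩ Dp).indicator (fun _ => δ) x ∂μ = (μ (A ∩ Dp)).toReal * δ := by
    rw [integral_indicator_const δ (hAm.inter hDp_meas)]
    simp [smul_eq_mul, Measure.real]
  rw [hT]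
  have : 2 * ε * δ ≤ (μ (A ∩ Dp)).toReal * δ :=
    mul_le_mul_of_nonneg_right hm hδ.le
  linarith [hmono, hleft ▸ hmono, this, hleft]
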